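/- arXiv:2510.04807 — 2 statements merged into one kernel-verified Lean document; each statement's English description precedes it below -/
import Mathlib

section
/- Let n ≥ 1, a ∈ ℝⁿ, M ∈ ℝ^{n×n}, let P and Σ be symmetric positive semidefinite n×n matrices, and let λ ≥ 0 with Σ ⪰ λI. Then √(aᵀ(MΣMᵀ + P)a) − √(aᵀ(λ·MMᵀ + P)a) ≤ ‖Mᵀa‖₂ · (√(λ_max(Σ)) − √λ). -/
open Matrix

noncomputable def eucNorm {n : ℕ} (v : Fin n → ℝ) : ℝ := Real.sqrt (∑ i, v i ^ 2)

noncomputable def lamMax {n : ℕ} (M : Matrix (Fin n) (Fin n) ℝ) : ℝ :=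
  sSup {r : ℝ | ∃ v : Fin n → ℝ, eucNorm v = 1 ∧ r = v ⬝ᵥ M.mulVec v}

noncomputable def lamMin {n : ℕ} (M : Matrix (Fin n) (Fin n) ℝ) : ℝ :=
  sInf {r : ℝ | ∃ v : Fin n → ℝ, eucNorm v = 1 ∧ r = v ⬝ᵥ M.mulVec v}

noncomputable def specNorm {n p : ℕ} (M : Matrix (Fin n) (Fin p) ℝ) : ℝ :=
  Real.sqrt (lamMax (Mᵀ * M))

structure Policy (n m T : ℕ) (A : Matrix (Fin n) (Fin n) ℝ) (B : Matrix (Fin n) (Fin m) ℝ) where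
  xbar : ℕ → Fin n → ℝ
  ubar : ℕ → Fin m → ℝ
  K : ℕ → Matrix (Fin m) (Fin n) ℝ
  xbar_dyn : ∀ k, k < T → xbar (k + 1) = A.mulVec (xbar k) + B.mulVec (ubar k)

namespace Policy

variable {n m T : ℕ} {A : Matrix (Fin n) (Fin n) ℝ} {B : Matrix (Fin n) (Fin m) ℝ}

noncomputable def mean (C : Policy n m T A B) (mu0 : Fin n → ℝ) : ℕ → Fin n → ℝ
  | 0 => mu0
  | k + 1 => A.mulVec (C.mean mu0 k) + B.mulVec (C.ubar k)
      + B.mulVec ((C.K k).mulVec (C.mean mu0 k - C.xbar k))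

noncomputable def cov (C : Policy n m T A B) (D : Matrix (Fin n) (Fin n) ℝ)
    (Sig0 : Matrix (Fin n) (Fin n) ℝ) : ℕ → Matrix (Fin n) (Fin n) ℝ
  | 0 => Sig0
  | k + 1 => (A + B * C.K k) * C.cov D Sig0 k * (A + B * C.K k)ᵀ + D * Dᵀ

noncomputable def clProd (C : Policy n m T A B) : ℕ → Matrix (Fin n) (Fin n) ℝ
  | 0 => 1
  | k + 1 => (A + B * C.K k) * C.clProd k

end Policy

def stateOK {n m T : ℕ} {A : Matrix (Fin n) (Fin n) ℝ} {B : Matrix (Fin n) (Fin m) ℝ}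
    (c : ℝ) {I : ℕ} (ax : Fin I → Fin n → ℝ) (bx : Fin I → ℝ)
    (D : Matrix (Fin n) (Fin n) ℝ) (C : Policy n m T A B)
    (mu0 : Fin n → ℝ) (Sig0 : Matrix (Fin n) (Fin n) ℝ) : Prop :=
  ∀ i : Fin I, ∀ k ≤ T,
    ax i ⬝ᵥ C.mean mu0 k + c * Real.sqrt (ax i ⬝ᵥ (C.cov D Sig0 k).mulVec (ax i)) ≤ bx i

def ctrlOK {n m T : ℕ} {A : Matrix (Fin n) (Fin n) ℝ} {B : Matrix (Fin n) (Fin m) ℝ}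
    (c : ℝ) {J : ℕ} (au : Fin J → Fin m → ℝ) (bu : Fin J → ℝ)
    (D : Matrix (Fin n) (Fin n) ℝ) (C : Policy n m T A B)
    (mu0 : Fin n → ℝ) (Sig0 : Matrix (Fin n) (Fin n) ℝ) : Prop :=
  ∀ j : Fin J, ∀ k < T,
    au j ⬝ᵥ (C.ubar k + (C.K k).mulVec (C.mean mu0 k - C.xbar k))
      + c * Real.sqrt (au j ⬝ᵥ (C.K k * C.cov D Sig0 k * (C.K k)ᵀ).mulVec (au j)) ≤ bu j

def inBall {n : ℕ} (c : ℝ) (muHat : Fin n → ℝ) (rHat : ℝ)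
    (mu : Fin n → ℝ) (Sig : Matrix (Fin n) (Fin n) ℝ) : Prop :=
  eucNorm (mu - muHat) + c * Real.sqrt (lamMax Sig) ≤ rHat

def BRS {n m : ℕ} (T : ℕ) (A : Matrix (Fin n) (Fin n) ℝ) (B : Matrix (Fin n) (Fin m) ℝ)
    (D : Matrix (Fin n) (Fin n) ℝ) (c : ℝ) {I J : ℕ}
    (ax : Fin I → Fin n → ℝ) (bx : Fin I → ℝ) (au : Fin J → Fin m → ℝ) (bu : Fin J → ℝ)
    (S : Set ((Fin n → ℝ) × Matrix (Fin n) (Fin n) ℝ)) :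
    Set ((Fin n → ℝ) × Matrix (Fin n) (Fin n) ℝ) :=
  {p | p.2.PosSemidef ∧ ∃ C : Policy n m T A B, C.xbar 0 = p.1 ∧
    stateOK c ax bx D C p.1 p.2 ∧ ctrlOK c au bu D C p.1 p.2 ∧
    (C.mean p.1 T, C.cov D p.2 T) ∈ S}

def Proj {n : ℕ} (S : Set ((Fin n → ℝ) × Matrix (Fin n) (Fin n) ℝ)) : Set (Fin n → ℝ) :=
  {mu | ∃ Sig, (mu, Sig) ∈ S}


section SqrtQuadformAux

private lemma abs_le_enorm' {n : ℕ} (v : Fin n → ℝ) (i : Fin n) : |v i| ≤ eucNorm v := by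
  rw [← Real.sqrt_sq_eq_abs]
  apply Real.sqrt_le_sqrt
  exact Finset.single_le_sum (f := fun j => v j ^ 2) (fun j _ => sq_nonneg _) (Finset.mem_univ i)

private lemma lamMax_bddAbove {n : ℕ} (M : Matrix (Fin n) (Fin n) ℝ) :
    BddAbove {r : ℝ | ∃ v : Fin n → ℝ, eucNorm v = 1 ∧ r = v ⬝ᵥ M.mulVec v} := by
  refine ⟨∑ i, ∑ j, |M i j|, ?_⟩
  rintro r ⟨v, hv, rfl⟩
  have hvi : ∀ i, |v i| ≤ 1 := fun i => hv ▸ abs_le_enorm' v i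
  unfold dotProduct Matrix.mulVec dotProduct
  calc ∑ i, v i * ∑ j, M i j * v j ≤ ∑ i, ∑ j, |M i j| := by
        apply Finset.sum_le_sum; intro i _
        rw [Finset.mul_sum]
        apply Finset.sum_le_sum; intro j _
        calc v i * (M i j * v j) ≤ |v i * (M i j * v j)| := le_abs_self _
          _ = |v i| * |M i j| * |v j| := by rw [abs_mul, abs_mul]; ring
          _ ≤ 1 * |M i j| * 1 := by
              apply mul_le_mul (mul_le_mul (hvi i) le_rfl (abs_nonneg _)
                (by linarith [abs_nonneg (v i), hvi i])) (hvi j) (abs_nonneg _)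
              positivity
          _ = |M i j| := by ring

private lemma rayleigh_le' {n : ℕ} (M : Matrix (Fin n) (Fin n) ℝ) (w : Fin n → ℝ)
    (h0 : 0 ≤ lamMax M) :
    w ⬝ᵥ M.mulVec w ≤ lamMax M * (eucNorm w)^2 := by
  by_cases hw : eucNorm w = 0
  · have hz : ∀ i, w i = 0 := by
      intro i
      have h1 := abs_le_enorm' w i
      rw [hw] at h1
      exact abs_eq_zero.mp (le_antisymm h1 (abs_nonneg _))
    have hw0 : w = 0 := funext hz
    rw [hw0]; simp only [Matrix.mulVec_zero, dotProduct_zero]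
    positivity
  · have hpos : 0 < eucNorm w := lt_of_le_of_ne (Real.sqrt_nonneg _) (Ne.symm hw)
    set e := eucNorm w with he
    have hmem : (e⁻¹ • w) ⬝ᵥ M.mulVec (e⁻¹ • w) ∈
        {r : ℝ | ∃ v : Fin n → ℝ, eucNorm v = 1 ∧ r = v ⬝ᵥ M.mulVec v} := by
      refine ⟨e⁻¹ • w, ?_, rfl⟩
      have h2 : eucNorm (e⁻¹ • w) = |e⁻¹| * eucNorm w := by
        unfold eucNorm
        rw [← Real.sqrt_sq_eq_abs, ← Real.sqrt_mul (sq_nonneg _), Finset.mul_sum]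
        congr 1; apply Finset.sum_congr rfl; intro i _; simp [mul_pow]
      rw [h2, abs_of_pos (inv_pos.mpr hpos)]
      field_simp
      exact he.symm
    have hle := le_csSup (lamMax_bddAbove M) hmem
    have hval : (e⁻¹ • w) ⬝ᵥ M.mulVec (e⁻¹ • w) = e⁻¹ * e⁻¹ * (w ⬝ᵥ M.mulVec w) := by
      rw [Matrix.mulVec_smul, smul_dotProduct, dotProduct_smul]
      simp [smul_eq_mul]; ring
    rw [hval] at hle
    have h3 : w ⬝ᵥ M.mulVec w = e^2 * (e⁻¹ * e⁻¹ * (w ⬝ᵥ M.mulVec w)) := by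
      field_simp
    rw [h3]
    calc e^2 * (e⁻¹ * e⁻¹ * (w ⬝ᵥ M.mulVec w)) ≤ e^2 * lamMax M :=
          mul_le_mul_of_nonneg_left hle (sq_nonneg e)
      _ = lamMax M * e^2 := by ring

private lemma sqrt_shift_le' (x y q : ℝ) (hy : 0 ≤ y) (hxy : y ≤ x) (hq : 0 ≤ q) :
    Real.sqrt (x + q) - Real.sqrt (y + q) ≤ Real.sqrt x - Real.sqrt y := by
  have hx : 0 ≤ x := le_trans hy hxy
  have h1 : Real.sqrt (x+q) + Real.sqrt y ≤ Real.sqrt x + Real.sqrt (y+q) := by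
    have hmul : Real.sqrt ((x+q)*y) ≤ Real.sqrt (x*(y+q)) := by
      apply Real.sqrt_le_sqrt; nlinarith
    rw [Real.sqrt_mul (by linarith) y, Real.sqrt_mul hx (y+q)] at hmul
    have e1 := Real.sq_sqrt (show (0:ℝ) ≤ x+q by linarith)
    have e2 := Real.sq_sqrt hy
    have e3 := Real.sq_sqrt hx
    have e4 := Real.sq_sqrt (show (0:ℝ) ≤ y+q by linarith)
    have n1 := Real.sqrt_nonneg (x+q)
    have n2 := Real.sqrt_nonneg y
    have n3 := Real.sqrt_nonneg x
    have n4 := Real.sqrt_nonneg (y+q)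
    nlinarith [sq_nonneg (Real.sqrt (x+q) + Real.sqrt y - Real.sqrt x - Real.sqrt (y+q))]
  linarith

private lemma dot_self_eq_enorm_sq' {n : ℕ} (w : Fin n → ℝ) : w ⬝ᵥ w = (eucNorm w)^2 := by
  rw [show w ⬝ᵥ w = ∑ i, w i ^2 by unfold dotProduct; congr 1; funext i; ring]
  rw [eucNorm, Real.sq_sqrt (Finset.sum_nonneg fun i _ => sq_nonneg _)]

end SqrtQuadformAux

/-- quadratic-form square-root perturbation bound. -/
theorem sqrt_quadform_diff_le (n : ℕ) (hn : 1 ≤ n) (a : Fin n → ℝ)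
    (M : Matrix (Fin n) (Fin n) ℝ)
    (P Sig : Matrix (Fin n) (Fin n) ℝ) (hP : P.PosSemidef) (hSig : Sig.PosSemidef)
    (lam : ℝ) (hlam : 0 ≤ lam)
    (hdom : (Sig - lam • (1 : Matrix (Fin n) (Fin n) ℝ)).PosSemidef) :
    Real.sqrt (a ⬝ᵥ (M * Sig * Mᵀ + P).mulVec a)
      - Real.sqrt (a ⬝ᵥ (lam • (M * Mᵀ) + P).mulVec a)
      ≤ eucNorm (Mᵀ.mulVec a) * (Real.sqrt (lamMax Sig) - Real.sqrt lam) := by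
  set w : Fin n → ℝ := Mᵀ.mulVec a with hw
  have hq : 0 ≤ a ⬝ᵥ P.mulVec a := by simpa using hP.dotProduct_mulVec_nonneg a
  set q : ℝ := a ⬝ᵥ P.mulVec a with hqdef
  set x : ℝ := w ⬝ᵥ Sig.mulVec w with hxdef
  set y : ℝ := lam * (w ⬝ᵥ w) with hydef
  have hwnn : 0 ≤ w ⬝ᵥ w := by
    rw [dot_self_eq_enorm_sq']; positivity
  have hy : 0 ≤ y := mul_nonneg hlam hwnn
  have hxy : y ≤ x := by
    have hd := hdom.dotProduct_mulVec_nonneg w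
    have hd' : 0 ≤ w ⬝ᵥ (Sig - lam • 1).mulVec w := by simpa using hd
    rw [Matrix.sub_mulVec, dotProduct_sub, Matrix.smul_mulVec,
      Matrix.one_mulVec, dotProduct_smul, smul_eq_mul] at hd'
    linarith
  -- lam ≤ lamMax Sig
  have hlamMax : lam ≤ lamMax Sig := by
    have i0 : Fin n := ⟨0, hn⟩
    set v : Fin n → ℝ := Pi.single i0 1 with hv
    have hnv : eucNorm v = 1 := by
      unfold eucNorm
      rw [show (∑ i, v i ^2) = 1 by
        rw [Finset.sum_eq_single i0]
        · simp [hv]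
        · intro b _ hb; simp [hv, Pi.single_eq_of_ne hb]
        · simp]
      exact Real.sqrt_one
    have hd := hdom.dotProduct_mulVec_nonneg v
    have hd' : 0 ≤ v ⬝ᵥ (Sig - lam • 1).mulVec v := by simpa using hd
    have hvv : v ⬝ᵥ v = 1 := by
      unfold dotProduct
      rw [Finset.sum_eq_single i0]
      · simp [hv]
      · intro b _ hb; simp [hv, Pi.single_eq_of_ne hb]
      · simp
    have hkey : lam ≤ v ⬝ᵥ Sig.mulVec v := by
      rw [Matrix.sub_mulVec, dotProduct_sub, Matrix.smul_mulVec,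
        Matrix.one_mulVec, dotProduct_smul, hvv, smul_eq_mul, mul_one] at hd'
      linarith
    exact le_trans hkey (le_csSup (lamMax_bddAbove Sig) ⟨v, hnv, rfl⟩)
  have hlm0 : 0 ≤ lamMax Sig := le_trans hlam hlamMax
  -- rewrite quadratic forms
  have h1 : a ⬝ᵥ (M * Sig * Mᵀ + P).mulVec a = x + q := by
    rw [Matrix.add_mulVec, dotProduct_add]
    congr 1
    rw [hxdef, hw, ← Matrix.mulVec_mulVec, ← Matrix.mulVec_mulVec, Matrix.dotProduct_mulVec,
      ← Matrix.mulVec_transpose]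
  have h2 : a ⬝ᵥ (lam • (M * Mᵀ) + P).mulVec a = y + q := by
    rw [Matrix.add_mulVec, dotProduct_add]
    congr 1
    rw [hydef, Matrix.smul_mulVec, dotProduct_smul, smul_eq_mul]
    congr 1
    rw [hw, ← Matrix.mulVec_mulVec, Matrix.dotProduct_mulVec, ← Matrix.mulVec_transpose]
  rw [h1, h2]
  have hstep1 := sqrt_shift_le' x y q hy hxy hq
  have hstep2 : Real.sqrt x ≤ eucNorm w * Real.sqrt (lamMax Sig) := by
    have hb := rayleigh_le' Sig w hlm0
    calc Real.sqrt x ≤ Real.sqrt (lamMax Sig * (eucNorm w)^2) := Real.sqrt_le_sqrt hb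
      _ = Real.sqrt (lamMax Sig) * Real.sqrt ((eucNorm w)^2) := Real.sqrt_mul hlm0 _
      _ = eucNorm w * Real.sqrt (lamMax Sig) := by
          rw [Real.sqrt_sq (show (0:ℝ) ≤ eucNorm w from Real.sqrt_nonneg _)]; ring
  have hstep3 : Real.sqrt y = eucNorm w * Real.sqrt lam := by
    rw [hydef, dot_self_eq_enorm_sq', Real.sqrt_mul hlam,
      Real.sqrt_sq (show (0:ℝ) ≤ eucNorm w from Real.sqrt_nonneg _)]; ring
  calc Real.sqrt (x + q) - Real.sqrt (y + q) ≤ Real.sqrt x - Real.sqrt y := hstep1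
    _ ≤ eucNorm w * Real.sqrt (lamMax Sig) - eucNorm w * Real.sqrt lam := by
        rw [hstep3]; linarith
    _ = eucNorm w * (Real.sqrt (lamMax Sig) - Real.sqrt lam) := by ring
end

section
/- (Slack-based perturbation robustness.) Let C be an affine feedback policy with x̄₀ = μ₀′, and let (μ_k′, Σ_k) be the trajectory propagated by C from a moment pair (μ₀′, Σ₀). Suppose: (i) there is δ_c > 0 with (a_i^x)ᵀ μ_k′ + c·√((a_i^x)ᵀ Σ_k a_i^x) + δ_c ≤ b_i^x for all i and all 0 ≤ k ≤ T; (ii) there is δ_f > 0 with c·√(λ_max(Σ_T)) + δ_f ≤ r_G; (iii) μ_T′ = μ_G; and (iv) δ₀ > 0 satisfies ‖a_i^x‖₂ · ‖𝒜_{0,k−1}‖ · δ₀ ≤ δ_c for all i and all 0 ≤ k ≤ T, and ‖𝒜_{0,T−1}‖ · δ₀ ≤ δ_f. Then for every μ₀ with ‖μ₀ − μ₀′‖₂ ≤ δ₀, the trajectory (μ_k, Σ_k) propagated by C from (μ₀, Σ₀) satisfies (a_i^x)ᵀ μ_k + c·√((a_i^x)ᵀ Σ_k a_i^x) ≤ b_i^x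 for all i and all 0 ≤ k ≤ T, and its terminal pair satisfies ‖μ_T − μ_G‖₂ + c·√(λ_max(Σ_T)) ≤ r_G. -/
open Matrix

lemma eucNorm_nonneg {n : ℕ} (v : Fin n → ℝ) : 0 ≤ eucNorm v := Real.sqrt_nonneg _

lemma eucNorm_sq {n : ℕ} (v : Fin n → ℝ) : eucNorm v ^ 2 = ∑ i, v i ^ 2 :=
  Real.sq_sqrt (Finset.sum_nonneg fun i _ => sq_nonneg _)

lemma eucNorm_smul {n : ℕ} (r : ℝ) (v : Fin n → ℝ) : eucNorm (r • v) = |r| * eucNorm v := by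
  unfold eucNorm
  rw [← Real.sqrt_sq_eq_abs, ← Real.sqrt_mul (sq_nonneg r), Finset.mul_sum]
  congr 1; exact Finset.sum_congr rfl fun i _ => by simp [mul_pow]

lemma eucNorm_eq_zero {n : ℕ} {v : Fin n → ℝ} (h : eucNorm v = 0) : v = 0 := by
  have : ∑ i, v i ^ 2 = 0 := by
    have := congrArg (· ^ 2) h
    simpa [eucNorm_sq] using this
  funext i
  have := (Finset.sum_eq_zero_iff_of_nonneg (fun i _ => sq_nonneg (v i))).1 this i (by simp)
  simpa using pow_eq_zero_iff (n := 2) (by norm_num) |>.1 this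

lemma dot_le_eucNorm {n : ℕ} (a v : Fin n → ℝ) : a ⬝ᵥ v ≤ eucNorm a * eucNorm v := by
  have h1 : (a ⬝ᵥ v) ^ 2 ≤ (∑ i, a i ^ 2) * ∑ i, v i ^ 2 :=
    Finset.sum_mul_sq_le_sq_mul_sq _ _ _
  have h2 : a ⬝ᵥ v ≤ |a ⬝ᵥ v| := le_abs_self _
  calc a ⬝ᵥ v ≤ |a ⬝ᵥ v| := h2
    _ = Real.sqrt ((a ⬝ᵥ v) ^ 2) := (Real.sqrt_sq_eq_abs _).symm
    _ ≤ Real.sqrt ((∑ i, a i ^ 2) * ∑ i, v i ^ 2) := Real.sqrt_le_sqrt h1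
    _ = eucNorm a * eucNorm v := by
        rw [Real.sqrt_mul (Finset.sum_nonneg fun i _ => sq_nonneg _)]; rfl

lemma dot_self_MtM {n p : ℕ} (M : Matrix (Fin n) (Fin p) ℝ) (v : Fin p → ℝ) :
    v ⬝ᵥ (Mᵀ * M).mulVec v = ∑ i, (M.mulVec v) i ^ 2 := by
  rw [← Matrix.mulVec_mulVec, Matrix.dotProduct_mulVec, Matrix.vecMul_transpose]
  simp [dotProduct, sq]

lemma specNorm_nonneg {n p : ℕ} (M : Matrix (Fin n) (Fin p) ℝ) : 0 ≤ specNorm M :=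
  Real.sqrt_nonneg _

lemma bddAbove_quad {n p : ℕ} (M : Matrix (Fin n) (Fin p) ℝ) :
    BddAbove {r : ℝ | ∃ v : Fin p → ℝ, eucNorm v = 1 ∧ r = v ⬝ᵥ (Mᵀ * M).mulVec v} := by
  refine ⟨∑ i, ∑ j, M i j ^ 2, ?_⟩
  rintro r ⟨v, hv, rfl⟩
  rw [dot_self_MtM]
  have hv2 : ∑ j, v j ^ 2 = 1 := by
    have := congrArg (· ^ 2) hv; simpa [eucNorm_sq] using this
  refine Finset.sum_le_sum fun i _ => ?_
  calc (M.mulVec v i) ^ 2 = (∑ j, M i j * v j) ^ 2 := by rfl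
    _ ≤ (∑ j, M i j ^ 2) * ∑ j, v j ^ 2 := Finset.sum_mul_sq_le_sq_mul_sq _ _ _
    _ = ∑ j, M i j ^ 2 := by rw [hv2, mul_one]

lemma eucNorm_mulVec_le {n p : ℕ} (M : Matrix (Fin n) (Fin p) ℝ) (v : Fin p → ℝ) :
    eucNorm (M.mulVec v) ≤ specNorm M * eucNorm v := by
  rcases eq_or_ne (eucNorm v) 0 with h | h
  · rw [eucNorm_eq_zero h]
    simp [eucNorm, Matrix.mulVec_zero, h]
  · have hvpos : 0 < eucNorm v := lt_of_le_of_ne (eucNorm_nonneg v) (Ne.symm h)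
    set u : Fin p → ℝ := (eucNorm v)⁻¹ • v with hu
    have hun : eucNorm u = 1 := by
      rw [hu, eucNorm_smul, abs_of_pos (inv_pos.2 hvpos), inv_mul_cancel₀ h]
    have hmem : u ⬝ᵥ (Mᵀ * M).mulVec u ∈
        {r : ℝ | ∃ w : Fin p → ℝ, eucNorm w = 1 ∧ r = w ⬝ᵥ (Mᵀ * M).mulVec w} :=
      ⟨u, hun, rfl⟩
    have hle : u ⬝ᵥ (Mᵀ * M).mulVec u ≤ lamMax (Mᵀ * M) :=
      le_csSup (bddAbove_quad M) hmem
    have hMu : eucNorm (M.mulVec u) ≤ specNorm M := by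
      have h1 : eucNorm (M.mulVec u) ^ 2 = u ⬝ᵥ (Mᵀ * M).mulVec u := by
        rw [eucNorm_sq, dot_self_MtM]
      have : eucNorm (M.mulVec u) = Real.sqrt (u ⬝ᵥ (Mᵀ * M).mulVec u) := by
        rw [← h1, Real.sqrt_sq (eucNorm_nonneg _)]
      rw [this]
      exact Real.sqrt_le_sqrt hle
    have hveq : v = eucNorm v • u := by
      rw [hu, smul_smul, mul_inv_cancel₀ h, one_smul]
    calc eucNorm (M.mulVec v) = eucNorm (M.mulVec (eucNorm v • u)) := by rw [← hveq]
      _ = eucNorm v * eucNorm (M.mulVec u) := by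
          rw [Matrix.mulVec_smul, eucNorm_smul, abs_of_pos hvpos]
      _ ≤ eucNorm v * specNorm M := by
          exact mul_le_mul_of_nonneg_left hMu (le_of_lt hvpos)
      _ = specNorm M * eucNorm v := mul_comm _ _

lemma mean_diff {n m T : ℕ} {A : Matrix (Fin n) (Fin n) ℝ} {B : Matrix (Fin n) (Fin m) ℝ}
    (C : Policy n m T A B) (mu0 mu0' : Fin n → ℝ) :
    ∀ k, C.mean mu0 k - C.mean mu0' k = (C.clProd k).mulVec (mu0 - mu0') := by
  intro k
  induction k with
  | zero => simp [Policy.mean, Policy.clProd]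
  | succ k ih =>
    show (A.mulVec (C.mean mu0 k) + B.mulVec (C.ubar k)
        + B.mulVec ((C.K k).mulVec (C.mean mu0 k - C.xbar k)))
      - (A.mulVec (C.mean mu0' k) + B.mulVec (C.ubar k)
        + B.mulVec ((C.K k).mulVec (C.mean mu0' k - C.xbar k)))
      = ((A + B * C.K k) * C.clProd k).mulVec (mu0 - mu0')
    rw [← Matrix.mulVec_mulVec, ← ih, Matrix.add_mulVec]
    simp only [← Matrix.mulVec_mulVec, Matrix.mulVec_sub]
    abel

/-- Slack-based perturbation robustness. -/
theorem slack_perturbation_robustness (n m T I : ℕ) (hn : 1 ≤ n) (hm : 1 ≤ m) (hT : 1 ≤ T)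
    (c : ℝ) (hc : 0 < c)
    (A : Matrix (Fin n) (Fin n) ℝ) (B : Matrix (Fin n) (Fin m) ℝ)
    (D : Matrix (Fin n) (Fin n) ℝ)
    (ax : Fin I → Fin n → ℝ) (bx : Fin I → ℝ)
    (muG : Fin n → ℝ) (rG : ℝ) (hrG : 0 ≤ rG)
    (C : Policy n m T A B) (mu0' : Fin n → ℝ) (hx0 : C.xbar 0 = mu0')
    (Sig0 : Matrix (Fin n) (Fin n) ℝ) (hSig0 : Sig0.PosSemidef)
    (δc δf δ0 : ℝ) (hδc : 0 < δc) (hδf : 0 < δf) (hδ0 : 0 < δ0)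
    -- (i) the state constraints hold with slack δ_c along the nominal trajectory:
    (hstate : ∀ i : Fin I, ∀ k ≤ T,
      ax i ⬝ᵥ C.mean mu0' k
        + c * Real.sqrt (ax i ⬝ᵥ (C.cov D Sig0 k).mulVec (ax i)) + δc ≤ bx i)
    -- (ii) the terminal covariance has slack δ_f:
    (hterm : c * Real.sqrt (lamMax (C.cov D Sig0 T)) + δf ≤ rG)
    -- (iii) the nominal terminal mean is μ_G:
    (hmuT : C.mean mu0' T = muG)
    -- (iv) δ₀ is compatible with the slacks:
    (hδ0c : ∀ i : Fin I, ∀ k ≤ T, eucNorm (ax i) * specNorm (C.clProd k) * δ0 ≤ δc)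
    (hδ0f : specNorm (C.clProd T) * δ0 ≤ δf) :
    ∀ mu0 : Fin n → ℝ, eucNorm (mu0 - mu0') ≤ δ0 →
      (∀ i : Fin I, ∀ k ≤ T,
        ax i ⬝ᵥ C.mean mu0 k
          + c * Real.sqrt (ax i ⬝ᵥ (C.cov D Sig0 k).mulVec (ax i)) ≤ bx i) ∧
      eucNorm (C.mean mu0 T - muG) + c * Real.sqrt (lamMax (C.cov D Sig0 T)) ≤ rG := by
  intro mu0 hmu0
  have hΔ : ∀ k, eucNorm (C.mean mu0 k - C.mean mu0' k) ≤ specNorm (C.clProd k) * δ0 := by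
    intro k
    rw [mean_diff]
    calc eucNorm ((C.clProd k).mulVec (mu0 - mu0'))
        ≤ specNorm (C.clProd k) * eucNorm (mu0 - mu0') := eucNorm_mulVec_le _ _
      _ ≤ specNorm (C.clProd k) * δ0 :=
          mul_le_mul_of_nonneg_left hmu0 (specNorm_nonneg _)
  constructor
  · intro i k hk
    have hdot : ax i ⬝ᵥ C.mean mu0 k ≤ ax i ⬝ᵥ C.mean mu0' k + δc := by
      have h1 : ax i ⬝ᵥ C.mean mu0 k - ax i ⬝ᵥ C.mean mu0' k
          = ax i ⬝ᵥ (C.mean mu0 k - C.mean mu0' k) := by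
        rw [dotProduct_sub]
      have h2 : ax i ⬝ᵥ (C.mean mu0 k - C.mean mu0' k) ≤ δc := by
        calc ax i ⬝ᵥ (C.mean mu0 k - C.mean mu0' k)
            ≤ eucNorm (ax i) * eucNorm (C.mean mu0 k - C.mean mu0' k) := dot_le_eucNorm _ _
          _ ≤ eucNorm (ax i) * (specNorm (C.clProd k) * δ0) :=
              mul_le_mul_of_nonneg_left (hΔ k) (eucNorm_nonneg _)
          _ = eucNorm (ax i) * specNorm (C.clProd k) * δ0 := by ring
          _ ≤ δc := hδ0c i k hk
      linarith [h1 ▸ h2]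
    have := hstate i k hk
    linarith
  · have h1 : eucNorm (C.mean mu0 T - muG) ≤ δf := by
      rw [← hmuT]
      exact le_trans (hΔ T) hδ0f
    linarith
end
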